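/- Let M be an ε-differentially private mechanism and T a (randomized) data-augmentation preprocessing map such that for neighboring inputs D, D', the symmetric difference Y = |T(D) ⊕ T(D')| (under coupled randomness) is a random variable bounded by N_ℓ and satisfying a Chernoff tail bound Pr[Y ≥ (1+γ)N_ℓ/k] ≤ exp(-(γ²/(2+γ))·N_ℓ/k). Then for any measurable set S, Pr[M(T(D)) ∈ S] ≤ exp(ε(1+γ)N_ℓ/k)·Pr[M(T(D')) ∈ S] + exp(ε·N_ℓ - (γ²/(2+γ))·N_ℓ/k). -/

import Mathlib

open MeasureTheory

/-- Composing an `ε`-DP mechanism `M` (with group privacy) with a randomized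
preprocessing map whose coupled symmetric difference `Y` is bounded by `N_ℓ` and
satisfies a Chernoff tail bound yields
`Pr[M(T(D)) ∈ S] ≤ e^{ε(1+γ)N_ℓ/k} Pr[M(T(D')) ∈ S] + e^{ε N_ℓ − (γ²/(2+γ)) N_ℓ/k}`. -/
theorem smote_composition {α Ω Θ : Type*} [DecidableEq α] [MeasurableSpace Ω]
    [MeasurableSpace Θ] {m : ℕ}
    (M : (Fin m → α) → Measure Ω) [∀ a, IsProbabilityMeasure (M a)]
    (P : Measure Θ) [IsProbabilityMeasure P]
    (ε γ Nl k : ℝ) (hε : 0 ≤ ε) (hγ : 0 ≤ γ) (hNl : 0 < Nl) (hk : 1 ≤ k)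
    (hGroup : ∀ a a' : Fin m → α, ∀ j : ℕ,
      (Finset.univ.filter fun i => a i ≠ a' i).card ≤ j →
      ∀ s : Set Ω, MeasurableSet s →
        M a s ≤ ENNReal.ofReal (Real.exp (ε * j)) * M a' s)
    -- `TD θ` and `TD' θ` are the coupled outputs of the preprocessing on `D` and `D'`
    (TD TD' : Θ → Fin m → α)
    (hMeas : Measurable fun θ => M (TD θ)) (hMeas' : Measurable fun θ => M (TD' θ))
    -- `Y ≤ N_ℓ` almost surely (here: surely)
    (hYbound : ∀ θ : Θ,
      (((Finset.univ.filter fun i => TD θ i ≠ TD' θ i).card : ℝ)) ≤ Nl)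
    -- the Chernoff tail bound on `Y`
    (hChernoff : P {θ | (1 + γ) * Nl / k ≤
        ((Finset.univ.filter fun i => TD θ i ≠ TD' θ i).card : ℝ)} ≤
      ENNReal.ofReal (Real.exp (-(γ ^ 2 / (2 + γ)) * Nl / k)))
    (s : Set Ω) (hs : MeasurableSet s) :
    (P.bind fun θ => M (TD θ)) s ≤
      ENNReal.ofReal (Real.exp (ε * (1 + γ) * Nl / k)) * (P.bind fun θ => M (TD' θ)) s +
        ENNReal.ofReal (Real.exp (ε * Nl - γ ^ 2 / (2 + γ) * Nl / k)) := by
  classical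
  set Y : Θ → ℝ := fun θ => ((Finset.univ.filter fun i => TD θ i ≠ TD' θ i).card : ℝ) with hY
  set B : Set Θ := {θ | (1 + γ) * Nl / k ≤ Y θ} with hB
  set c1 : ENNReal := ENNReal.ofReal (Real.exp (ε * (1 + γ) * Nl / k)) with hc1
  set c2 : ENNReal := ENNReal.ofReal (Real.exp (ε * Nl)) with hc2
  have hg : Measurable fun θ => M (TD' θ) s :=
    (Measure.measurable_coe hs).comp hMeas'
  have hpt : ∀ θ, M (TD θ) s ≤ c1 * M (TD' θ) s + B.indicator (fun _ => c2) θ := by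
    intro θ
    have hgrp := hGroup (TD θ) (TD' θ)
      ((Finset.univ.filter fun i => TD θ i ≠ TD' θ i).card) le_rfl s hs
    by_cases hθ : θ ∈ B
    · have h1 : M (TD θ) s ≤ c2 := by
        calc M (TD θ) s ≤ ENNReal.ofReal (Real.exp (ε *
              ((Finset.univ.filter fun i => TD θ i ≠ TD' θ i).card : ℕ))) * M (TD' θ) s := hgrp
        _ ≤ c2 * 1 := by
            refine mul_le_mul ?_ prob_le_one zero_le zero_le
            exact ENNReal.ofReal_le_ofReal (Real.exp_le_exp.mpr
              (mul_le_mul_of_nonneg_left (hYbound θ) hε))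
        _ = c2 := mul_one _
      calc M (TD θ) s ≤ c2 := h1
      _ = B.indicator (fun _ => c2) θ := (Set.indicator_of_mem hθ fun _ => c2).symm
      _ ≤ _ := le_add_self
    · have hlt : Y θ < (1 + γ) * Nl / k := lt_of_not_ge hθ
      have h1 : M (TD θ) s ≤ c1 * M (TD' θ) s := by
        refine hgrp.trans (mul_le_mul_left ?_ _)
        refine ENNReal.ofReal_le_ofReal (Real.exp_le_exp.mpr ?_)
        have : ε * Y θ ≤ ε * ((1 + γ) * Nl / k) :=
          mul_le_mul_of_nonneg_left hlt.le hε
        calc ε * ((Finset.univ.filter fun i => TD θ i ≠ TD' θ i).card : ℕ) = ε * Y θ := by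
              simp [hY]
        _ ≤ ε * ((1 + γ) * Nl / k) := this
        _ = ε * (1 + γ) * Nl / k := by ring
      calc M (TD θ) s ≤ c1 * M (TD' θ) s := h1
      _ ≤ _ := le_add_right le_rfl
  rw [Measure.bind_apply hs hMeas.aemeasurable, Measure.bind_apply hs hMeas'.aemeasurable]
  calc ∫⁻ θ, M (TD θ) s ∂P
      ≤ ∫⁻ θ, (c1 * M (TD' θ) s + B.indicator (fun _ => c2) θ) ∂P := lintegral_mono hpt
    _ = (∫⁻ θ, c1 * M (TD' θ) s ∂P) + ∫⁻ θ, B.indicator (fun _ => c2) θ ∂P :=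
        lintegral_add_left (hg.const_mul c1) _
    _ ≤ c1 * (∫⁻ θ, M (TD' θ) s ∂P) + c2 * P B := by
        rw [lintegral_const_mul c1 hg]
        exact add_le_add_right (lintegral_indicator_const_le _ _) _
    _ ≤ c1 * (∫⁻ θ, M (TD' θ) s ∂P) +
        c2 * ENNReal.ofReal (Real.exp (-(γ ^ 2 / (2 + γ)) * Nl / k)) := by
        exact add_le_add_right (mul_le_mul_right hChernoff _) _
    _ = c1 * (∫⁻ θ, M (TD' θ) s ∂P) +
        ENNReal.ofReal (Real.exp (ε * Nl - γ ^ 2 / (2 + γ) * Nl / k)) := by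
        rw [hc2, ← ENNReal.ofReal_mul (Real.exp_nonneg _), ← Real.exp_add]
        ring_nf
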